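/- For every w, v ∈ ℝ^d and every ρ ≥ 0, the second moment of v·x under the Gibbs distribution with tilted parameter ρw is close to the uniform second moment: |E_{x∼φ(·;ρw)}[(v·x)²] − E_{x∼U(X)}[(v·x)²]| ≤ 2ρ‖w‖₂D³‖v‖₂². -/

import Mathlib

open Finset
open scoped InnerProductSpace BigOperators

noncomputable section

/-- The Gibbs distribution on a finite set `X ⊆ ℝ^d` with parameter `w`:
`φ(x; w) = exp(w·x) / ∑_{y ∈ X} exp(w·y)`. -/
def gibbs {d : ℕ} (X : Finset (EuclideanSpace ℝ (Fin d)))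
    (w x : EuclideanSpace ℝ (Fin d)) : ℝ :=
  Real.exp ⟪w, x⟫_ℝ / ∑ y ∈ X, Real.exp ⟪w, y⟫_ℝ

/-- Expectation of a real function under the Gibbs distribution. -/
def gibbsExp {d : ℕ} (X : Finset (EuclideanSpace ℝ (Fin d)))
    (w : EuclideanSpace ℝ (Fin d)) (f : EuclideanSpace ℝ (Fin d) → ℝ) : ℝ :=
  ∑ x ∈ X, gibbs X w x * f x

/-- Variance of a real function under the Gibbs distribution. -/
def gibbsVar {d : ℕ} (X : Finset (EuclideanSpace ℝ (Fin d)))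
    (w : EuclideanSpace ℝ (Fin d)) (f : EuclideanSpace ℝ (Fin d) → ℝ) : ℝ :=
  gibbsExp X w (fun x => f x ^ 2) - (gibbsExp X w f) ^ 2

/-- Mean (a vector) of the Gibbs distribution. -/
def gibbsMean {d : ℕ} (X : Finset (EuclideanSpace ℝ (Fin d)))
    (w : EuclideanSpace ℝ (Fin d)) : EuclideanSpace ℝ (Fin d) :=
  ∑ x ∈ X, gibbs X w x • x

/-- The negative entropy `H(w) = E_{x ∼ φ(·;w)}[log φ(x;w)]`. -/
def negEnt {d : ℕ} (X : Finset (EuclideanSpace ℝ (Fin d)))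
    (w : EuclideanSpace ℝ (Fin d)) : ℝ :=
  ∑ x ∈ X, gibbs X w x * Real.log (gibbs X w x)


/-- Mean (a vector) of the uniform distribution on `X`. -/
def unifMean {d : ℕ} (X : Finset (EuclideanSpace ℝ (Fin d))) : EuclideanSpace ℝ (Fin d) :=
  (X.card : ℝ)⁻¹ • ∑ x ∈ X, x

/-- Expectation of a real function under the uniform distribution on `X`. -/
def unifExp {d : ℕ} (X : Finset (EuclideanSpace ℝ (Fin d)))
    (f : EuclideanSpace ℝ (Fin d) → ℝ) : ℝ :=
  (X.card : ℝ)⁻¹ * ∑ x ∈ X, f x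

/-- Variance of a real function under the uniform distribution on `X`. -/
def unifVar {d : ℕ} (X : Finset (EuclideanSpace ℝ (Fin d)))
    (f : EuclideanSpace ℝ (Fin d) → ℝ) : ℝ :=
  unifExp X (fun x => f x ^ 2) - (unifExp X f) ^ 2

/-- For every `w, v` and every `ρ ≥ 0`, the second moment of `v·x` under the
Gibbs distribution with tilted parameter `ρw` is close to the uniform second moment:
`|E_{x∼φ(·;ρw)}[(v·x)²] − E_{x∼U(X)}[(v·x)²]| ≤ 2ρ‖w‖₂D³‖v‖₂²`. -/

lemma abs_exp_sub_exp_le (s t : ℝ) :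
    |Real.exp s - Real.exp t| ≤ |s - t| * (Real.exp s + Real.exp t) := by
  have key : ∀ u v : ℝ, v ≤ u →
      Real.exp u - Real.exp v ≤ (u - v) * (Real.exp u + Real.exp v) := by
    intro u v huv
    have h1 : v - u + 1 ≤ Real.exp (v - u) := Real.add_one_le_exp _
    have h2 : Real.exp (v - u) * Real.exp u = Real.exp v := by
      rw [← Real.exp_add]; ring_nf
    nlinarith [Real.exp_pos u, Real.exp_pos v]
  rcases le_total t s with h | h
  · rw [abs_of_nonneg (sub_nonneg.2 (Real.exp_le_exp.2 h)), abs_of_nonneg (sub_nonneg.2 h)]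
    exact key s t h
  · rw [abs_sub_comm, abs_sub_comm s t,
      abs_of_nonneg (sub_nonneg.2 (Real.exp_le_exp.2 h)), abs_of_nonneg (sub_nonneg.2 h)]
    calc Real.exp t - Real.exp s ≤ (t - s) * (Real.exp t + Real.exp s) := key t s h
    _ = (t - s) * (Real.exp s + Real.exp t) := by ring

lemma gibbs_unif_bound {α : Type*} (X : Finset α) (hX : X.Nonempty)
    (e f : α → ℝ) (C M : ℝ) (hM : 0 ≤ M)
    (he : ∀ x ∈ X, |e x| ≤ C)
    (hf0 : ∀ x ∈ X, 0 ≤ f x) (hfM : ∀ x ∈ X, f x ≤ M) :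
    |(∑ x ∈ X, Real.exp (e x) / (∑ y ∈ X, Real.exp (e y)) * f x)
      - (X.card : ℝ)⁻¹ * ∑ x ∈ X, f x| ≤ 2 * C * M := by
  have hC : 0 ≤ C := le_trans (abs_nonneg _) (he _ hX.choose_spec)
  set Z := ∑ y ∈ X, Real.exp (e y) with hZ
  set n : ℝ := (X.card : ℝ) with hn
  have hZpos : 0 < Z := Finset.sum_pos (fun y _ => Real.exp_pos _) hX
  have hnpos : 0 < n := by
    rw [hn]; exact_mod_cast Finset.card_pos.mpr hX
  set T := ∑ x ∈ X, ∑ y ∈ X, (Real.exp (e x) - Real.exp (e y)) * f x with hT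
  have h1 : T = ∑ x ∈ X, (n * Real.exp (e x) - Z) * f x := by
    refine Finset.sum_congr rfl fun x hx => ?_
    rw [← Finset.sum_mul, Finset.sum_sub_distrib, Finset.sum_const, nsmul_eq_mul, ← hZ, ← hn]
  have key : (∑ x ∈ X, Real.exp (e x) / Z * f x) - n⁻¹ * ∑ x ∈ X, f x = (n * Z)⁻¹ * T := by
    rw [h1, Finset.mul_sum, Finset.mul_sum, ← Finset.sum_sub_distrib]
    refine Finset.sum_congr rfl fun x hx => ?_
    field_simp
  have hswap : T = ∑ x ∈ X, ∑ y ∈ X, (Real.exp (e y) - Real.exp (e x)) * f y :=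
    hT.trans Finset.sum_comm
  have h2T : 2 * T = ∑ x ∈ X, ∑ y ∈ X,
      (Real.exp (e x) - Real.exp (e y)) * (f x - f y) := by
    calc 2 * T = (∑ x ∈ X, ∑ y ∈ X, (Real.exp (e x) - Real.exp (e y)) * f x)
        + ∑ x ∈ X, ∑ y ∈ X, (Real.exp (e y) - Real.exp (e x)) * f y := by
          rw [two_mul]; exact congrArg₂ (· + ·) hT hswap
    _ = ∑ x ∈ X, ∑ y ∈ X, (Real.exp (e x) - Real.exp (e y)) * (f x - f y) := by
        rw [← Finset.sum_add_distrib]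
        refine Finset.sum_congr rfl fun x hx => ?_
        rw [← Finset.sum_add_distrib]
        exact Finset.sum_congr rfl fun y hy => by ring
  have hpt : ∀ x ∈ X, ∀ y ∈ X,
      |(Real.exp (e x) - Real.exp (e y)) * (f x - f y)| ≤
        (2 * C * M) * (Real.exp (e x) + Real.exp (e y)) := by
    intro x hx y hy
    rw [abs_mul]
    have h1 : |Real.exp (e x) - Real.exp (e y)| ≤
        (2 * C) * (Real.exp (e x) + Real.exp (e y)) := by
      refine (abs_exp_sub_exp_le _ _).trans ?_
      apply mul_le_mul_of_nonneg_right _ (by positivity)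
      calc |e x - e y| ≤ |e x| + |e y| := abs_sub _ _
      _ ≤ C + C := add_le_add (he x hx) (he y hy)
      _ = 2 * C := by ring
    have h2 : |f x - f y| ≤ M := by
      rw [abs_sub_le_iff]
      constructor <;> [linarith [hfM x hx, hf0 y hy]; linarith [hfM y hy, hf0 x hx]]
    calc |Real.exp (e x) - Real.exp (e y)| * |f x - f y|
        ≤ ((2 * C) * (Real.exp (e x) + Real.exp (e y))) * M := by
          apply mul_le_mul h1 h2 (abs_nonneg _)
          positivity
    _ = (2 * C * M) * (Real.exp (e x) + Real.exp (e y)) := by ring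
  have hsumexp : ∑ x ∈ X, ∑ y ∈ X, (Real.exp (e x) + Real.exp (e y)) = 2 * (n * Z) := by
    have : ∀ x ∈ X, ∑ y ∈ X, (Real.exp (e x) + Real.exp (e y))
        = n * Real.exp (e x) + Z := by
      intro x hx
      rw [Finset.sum_add_distrib, Finset.sum_const, nsmul_eq_mul, ← hZ, ← hn]
    rw [Finset.sum_congr rfl this, Finset.sum_add_distrib, Finset.sum_const, ← Finset.mul_sum,
      ← hZ, nsmul_eq_mul, ← hn]
    ring
  have h2Tbd : |2 * T| ≤ (2 * C * M) * (2 * (n * Z)) := by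
    rw [h2T, ← hsumexp, Finset.mul_sum]
    refine (Finset.abs_sum_le_sum_abs _ _).trans ?_
    refine Finset.sum_le_sum fun x hx => ?_
    rw [Finset.mul_sum]
    refine (Finset.abs_sum_le_sum_abs _ _).trans ?_
    exact Finset.sum_le_sum fun y hy => hpt x hx y hy
  have hTbd : |T| ≤ (2 * C * M) * (n * Z) := by
    rw [abs_mul, abs_of_nonneg (by norm_num : (0:ℝ) ≤ 2)] at h2Tbd
    linarith
  rw [key, abs_mul, abs_of_nonneg (by positivity : (0:ℝ) ≤ (n * Z)⁻¹)]
  calc (n * Z)⁻¹ * |T| ≤ (n * Z)⁻¹ * ((2 * C * M) * (n * Z)) :=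
        mul_le_mul_of_nonneg_left hTbd (by positivity)
  _ = 2 * C * M := by field_simp

theorem gibbs_tilted_second_moment_close_to_uniform {d : ℕ} (hd : 1 ≤ d)
    (X : Finset (EuclideanSpace ℝ (Fin d))) (hX : X.Nonempty)
    (D : ℝ) (hD : ∀ x ∈ X, ‖x‖ ≤ D) :
    ∀ (w v : EuclideanSpace ℝ (Fin d)) (ρ : ℝ), 0 ≤ ρ →
      |gibbsExp X (ρ • w) (fun x => ⟪v, x⟫_ℝ ^ 2) - unifExp X (fun x => ⟪v, x⟫_ℝ ^ 2)|
        ≤ 2 * ρ * ‖w‖ * D ^ 3 * ‖v‖ ^ 2 := by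
  intro w v ρ hρ
  obtain ⟨x₀, hx₀⟩ := hX
  have hD0 : 0 ≤ D := le_trans (norm_nonneg _) (hD _ hx₀)
  have habd : ∀ x ∈ X, |⟪ρ • w, x⟫_ℝ| ≤ ρ * ‖w‖ * D := by
    intro x hx
    have h0 : ⟪ρ • w, x⟫_ℝ = ρ * ⟪w, x⟫_ℝ := real_inner_smul_left w x ρ
    rw [h0, abs_mul, abs_of_nonneg hρ]
    calc ρ * |⟪w, x⟫_ℝ| ≤ ρ * (‖w‖ * ‖x‖) :=
          mul_le_mul_of_nonneg_left (abs_real_inner_le_norm w x) hρ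
    _ ≤ ρ * (‖w‖ * D) := by
        exact mul_le_mul_of_nonneg_left
          (mul_le_mul_of_nonneg_left (hD x hx) (norm_nonneg w)) hρ
    _ = ρ * ‖w‖ * D := by ring
  have hfM : ∀ x ∈ X, ⟪v, x⟫_ℝ ^ 2 ≤ ‖v‖ ^ 2 * D ^ 2 := by
    intro x hx
    have h1 : |⟪v, x⟫_ℝ| ≤ ‖v‖ * D :=
      (abs_real_inner_le_norm v x).trans
        (mul_le_mul_of_nonneg_left (hD x hx) (norm_nonneg v))
    calc ⟪v, x⟫_ℝ ^ 2 = |⟪v, x⟫_ℝ| ^ 2 := (sq_abs _).symm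
    _ ≤ (‖v‖ * D) ^ 2 := by
        apply pow_le_pow_left₀ (abs_nonneg _) h1
    _ = ‖v‖ ^ 2 * D ^ 2 := by ring
  have h := gibbs_unif_bound X ⟨x₀, hx₀⟩ (fun x => ⟪ρ • w, x⟫_ℝ)
    (fun x => ⟪v, x⟫_ℝ ^ 2) (ρ * ‖w‖ * D) (‖v‖ ^ 2 * D ^ 2) (by positivity)
    habd (fun x _ => by positivity) hfM
  calc |gibbsExp X (ρ • w) (fun x => ⟪v, x⟫_ℝ ^ 2) - unifExp X (fun x => ⟪v, x⟫_ℝ ^ 2)|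
      ≤ 2 * (ρ * ‖w‖ * D) * (‖v‖ ^ 2 * D ^ 2) := h
  _ = 2 * ρ * ‖w‖ * D ^ 3 * ‖v‖ ^ 2 := by ring

end
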